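/- Let J be a cocommutative Hopf algebra over a field k and K ⊆ J a Hopf subalgebra such that J is projective as a right K-module. Then for any surjective morphism p : M → N of right K-modules that are also right J-comodules (with K-action and J-coaction compatible, i.e., objects of the category of J-comodules internal to K-modules, J coacting cocommutatively), if p admits a J-colinear section, then p admits a section that is simultaneously K-linear and J-colinear. -/

import Mathlib

open scoped TensorProduct

namespace MaschkeSplittingAux
open Coalgebra TensorProduct LinearMap HopfAlgebra

variable {k : Type*} [CommRing k]


/-! ### Small Repr helpers -/

section ReprHelp
variable {H : Type*} [AddCommMonoid H] [Module k H] [Coalgebra k H]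

lemma sum_counit_smul_left {e : H} {ιr : Type*} (r : Repr k e ιr) :
    ∑ i ∈ r.index, counit (R := k) (r.right i) • r.left i = e := by
  have h := congrArg (TensorProduct.rid k H) (sum_tmul_counit_eq r)
  rw [map_sum, TensorProduct.rid_tmul, one_smul] at h
  simp only [TensorProduct.rid_tmul] at h
  exact h

lemma sum_counit_smul_right {e : H} {ιr : Type*} (r : Repr k e ιr) :
    ∑ i ∈ r.index, counit (R := k) (r.left i) • r.right i = e := by
  have h := congrArg (TensorProduct.lid k H) (sum_counit_tmul_eq r)
  rw [map_sum, TensorProduct.lid_tmul, one_smul] at h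
  simp only [TensorProduct.lid_tmul] at h
  exact h

end ReprHelp

/-- Product of two representations, in a bialgebra. -/
noncomputable def ReprMul {H : Type*} [Ring H] [Bialgebra k H] {x y : H} {ιx ιy : Type*}
    (rx : Repr k x ιx) (ry : Repr k y ιy) : Repr k (x * y) (ιx × ιy) where
  index := rx.index ×ˢ ry.index
  left := fun p => rx.left p.1 * ry.left p.2
  right := fun p => rx.right p.1 * ry.right p.2
  eq := by
    rw [Finset.sum_product]
    rw [Bialgebra.comul_mul, ← rx.eq, ← ry.eq, Finset.sum_mul_sum]
    simp [Algebra.TensorProduct.tmul_mul_tmul]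

/-! ### Convolution with explicit comultiplication data -/

section Conv
variable {C : Type*} [AddCommGroup C] [Module k C]
variable {A : Type*} [Ring A] [Algebra k A]

noncomputable def conv (Δc : C →ₗ[k] C ⊗[k] C) (f g : C →ₗ[k] A) : C →ₗ[k] A :=
  mul' k A ∘ₗ TensorProduct.map f g ∘ₗ Δc

lemma conv_apply (Δc : C →ₗ[k] C ⊗[k] C) (f g : C →ₗ[k] A) (w : C) :
    conv Δc f g w = mul' k A (TensorProduct.map f g (Δc w)) := rfl

noncomputable def convOne (εc : C →ₗ[k] k) : C →ₗ[k] A := Algebra.linearMap k A ∘ₗ εc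

lemma convOne_apply (εc : C →ₗ[k] k) (w : C) :
    convOne (A := A) εc w = algebraMap k A (εc w) := rfl

lemma conv_one (Δc : C →ₗ[k] C ⊗[k] C) (εc : C →ₗ[k] k)
    (hr : ∀ w : C, εc.lTensor C (Δc w) = w ⊗ₜ[k] (1 : k)) (f : C →ₗ[k] A) :
    conv Δc f (convOne εc) = f := by
  ext w
  have key : ∀ v : C ⊗[k] C, mul' k A (TensorProduct.map f (convOne (A := A) εc) v)
      = mul' k A (TensorProduct.map f (Algebra.linearMap k A) (εc.lTensor C v)) := by
    intro v
    induction v using TensorProduct.induction_on with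
    | zero => simp
    | tmul x y => simp [convOne_apply]
    | add u v hu hv => simp [map_add, hu, hv]
  rw [conv_apply, key, hr w]
  simp

lemma one_conv (Δc : C →ₗ[k] C ⊗[k] C) (εc : C →ₗ[k] k)
    (hl : ∀ w : C, εc.rTensor C (Δc w) = (1 : k) ⊗ₜ[k] w) (f : C →ₗ[k] A) :
    conv Δc (convOne εc) f = f := by
  ext w
  have key : ∀ v : C ⊗[k] C, mul' k A (TensorProduct.map (convOne (A := A) εc) f v)
      = mul' k A (TensorProduct.map (Algebra.linearMap k A) f (εc.rTensor C v)) := by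
    intro v
    induction v using TensorProduct.induction_on with
    | zero => simp
    | tmul x y => simp [convOne_apply]
    | add u v hu hv => simp [map_add, hu, hv]
  rw [conv_apply, key, hl w]
  simp

lemma conv_assoc (Δc : C →ₗ[k] C ⊗[k] C)
    (hco : ∀ w : C, TensorProduct.assoc k C C C (Δc.rTensor C (Δc w)) = Δc.lTensor C (Δc w))
    (f g h : C →ₗ[k] A) :
    conv Δc (conv Δc f g) h = conv Δc f (conv Δc g h) := by
  ext w
  have step1 : ∀ v : C ⊗[k] C, mul' k A (TensorProduct.map (conv Δc f g) h v)
      = (mul' k A ∘ₗ TensorProduct.map (mul' k A ∘ₗ TensorProduct.map f g) h)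
          (Δc.rTensor C v) := by
    intro v
    induction v using TensorProduct.induction_on with
    | zero => simp
    | tmul x y => simp [conv_apply]
    | add u v hu hv => simp [map_add, hu, hv]
  have step2 : ∀ v : C ⊗[k] C, mul' k A (TensorProduct.map f (conv Δc g h) v)
      = (mul' k A ∘ₗ TensorProduct.map f (mul' k A ∘ₗ TensorProduct.map g h))
          (Δc.lTensor C v) := by
    intro v
    induction v using TensorProduct.induction_on with
    | zero => simp
    | tmul x y => simp [conv_apply]
    | add u v hu hv => simp [map_add, hu, hv]
  have step3 : ∀ u : (C ⊗[k] C) ⊗[k] C,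
      (mul' k A ∘ₗ TensorProduct.map (mul' k A ∘ₗ TensorProduct.map f g) h) u
      = (mul' k A ∘ₗ TensorProduct.map f (mul' k A ∘ₗ TensorProduct.map g h))
          (TensorProduct.assoc k C C C u) := by
    intro u
    induction u using TensorProduct.induction_on with
    | zero => simp
    | tmul v z =>
      induction v using TensorProduct.induction_on with
      | zero => simp
      | tmul x y => simp [mul_assoc]
      | add u v hu hv => simp only [add_tmul, map_add, hu, hv]
    | add u v hu hv => simp [map_add, hu, hv]
  rw [conv_apply, conv_apply, step1, step2, step3, hco w]

lemma conv_inv_unique (Δc : C →ₗ[k] C ⊗[k] C) (εc : C →ₗ[k] k)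
    (hco : ∀ w : C, TensorProduct.assoc k C C C (Δc.rTensor C (Δc w)) = Δc.lTensor C (Δc w))
    (hl : ∀ w : C, εc.rTensor C (Δc w) = (1 : k) ⊗ₜ[k] w)
    (hr : ∀ w : C, εc.lTensor C (Δc w) = w ⊗ₜ[k] (1 : k))
    {f g h : C →ₗ[k] A} (h1 : conv Δc g f = convOne εc) (h2 : conv Δc f h = convOne εc) :
    g = h := by
  have := conv_assoc Δc hco g f h
  rw [h1, h2, one_conv Δc εc hl, conv_one Δc εc hr] at this
  exact this.symm

end Conv




section Expand
variable {H : Type*} [AddCommGroup H] [Module k H] [Coalgebra k H]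

lemma lTensor_comul_expand {c : H} {ιr : Type*} {Λ : ιr → Type*} (r : Repr k c ιr)
    (rr : ∀ i, Repr k (r.right i) (Λ i)) :
    LinearMap.lTensor H (comul (R := k)) (comul c)
      = ∑ i ∈ r.index, ∑ t ∈ (rr i).index,
          r.left i ⊗ₜ[k] ((rr i).left t ⊗ₜ[k] (rr i).right t) := by
  rw [← r.eq, map_sum]
  exact Finset.sum_congr rfl fun i _ => by
    rw [LinearMap.lTensor_tmul, ← (rr i).eq, tmul_sum]

lemma rTensor_comul_expand {c : H} {ιr : Type*} {κ : ιr → Type*} (r : Repr k c ιr)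
    (rl : ∀ i, Repr k (r.left i) (κ i)) :
    LinearMap.rTensor H (comul (R := k)) (comul c)
      = ∑ i ∈ r.index, ∑ s ∈ (rl i).index,
          ((rl i).left s ⊗ₜ[k] (rl i).right s) ⊗ₜ[k] r.right i := by
  rw [← r.eq, map_sum]
  exact Finset.sum_congr rfl fun i _ => by
    rw [LinearMap.rTensor_tmul, ← (rl i).eq, sum_tmul]

lemma map_comul_comul_expand {c : H} {ιr : Type*} {κ Λ : ιr → Type*} (r : Repr k c ιr)
    (rl : ∀ i, Repr k (r.left i) (κ i)) (rr : ∀ i, Repr k (r.right i) (Λ i)) :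
    TensorProduct.map (comul (R := k)) (comul (R := k)) (comul c)
      = ∑ i ∈ r.index, ∑ s ∈ (rl i).index, ∑ t ∈ (rr i).index,
          ((rl i).left s ⊗ₜ[k] (rl i).right s) ⊗ₜ[k] ((rr i).left t ⊗ₜ[k] (rr i).right t) := by
  rw [← r.eq, map_sum]
  refine Finset.sum_congr rfl fun i _ => ?_
  rw [TensorProduct.map_tmul, ← (rl i).eq, ← (rr i).eq, sum_tmul]
  exact Finset.sum_congr rfl fun s _ => by rw [tmul_sum]

/-- The "middle swap" invariance of `(Δ ⊗ Δ) ∘ Δ` for a cocommutative coalgebra. -/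
lemma map_comul_comul_ttc_invariant
    (hco : ∀ x : H, TensorProduct.comm k H H (comul (R := k) x) = comul x) (c : H) :
    tensorTensorTensorComm k H H H H
        (TensorProduct.map (comul (R := k)) (comul (R := k)) (comul c))
      = TensorProduct.map (comul (R := k)) (comul (R := k)) (comul c) := by
  classical
  set r : Repr k c (H × H) := ℛ k c with hr
  set rr : ∀ i, Repr k (r.right i) (H × H) := fun i => ℛ k (r.right i) with hrrdef
  set rrr : ∀ i t, Repr k ((rr i).right t) (H × H) := fun i t => ℛ k ((rr i).right t) with hrrrdef
  have e1 : TensorProduct.map (comul (R := k) (A := H)) (comul (R := k))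
      = LinearMap.lTensor (H ⊗[k] H) (comul (R := k))
          ∘ₗ LinearMap.rTensor H (comul (R := k)) := by
    apply TensorProduct.ext'; intro x y; simp
  have e2 : LinearMap.rTensor H (comul (R := k)) (comul c)
      = ∑ i ∈ r.index, ∑ t ∈ (rr i).index,
          (r.left i ⊗ₜ[k] (rr i).left t) ⊗ₜ[k] (rr i).right t := by
    rw [← Coalgebra.coassoc_symm_apply, lTensor_comul_expand r rr, map_sum]
    exact Finset.sum_congr rfl fun i _ => by
      rw [map_sum]
      exact Finset.sum_congr rfl fun t _ => by simp
  have hX : TensorProduct.map (comul (R := k)) (comul (R := k)) (comul c)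
      = ∑ i ∈ r.index, ∑ t ∈ (rr i).index, ∑ z ∈ (rrr i t).index,
          (r.left i ⊗ₜ[k] (rr i).left t) ⊗ₜ[k]
            ((rrr i t).left z ⊗ₜ[k] (rrr i t).right z) := by
    rw [e1, LinearMap.comp_apply, e2, map_sum]
    refine Finset.sum_congr rfl fun i _ => ?_
    rw [map_sum]
    refine Finset.sum_congr rfl fun t _ => ?_
    rw [LinearMap.lTensor_tmul, ← (rrr i t).eq, tmul_sum]
  have hT : tensorTensorTensorComm k H H H H
        (TensorProduct.map (comul (R := k)) (comul (R := k)) (comul c))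
      = ∑ i ∈ r.index, ∑ t ∈ (rr i).index, ∑ z ∈ (rrr i t).index,
          (r.left i ⊗ₜ[k] (rrr i t).left z) ⊗ₜ[k]
            ((rr i).left t ⊗ₜ[k] (rrr i t).right z) := by
    rw [hX]
    simp only [map_sum, tensorTensorTensorComm_tmul]
  rw [hT, hX]
  refine Finset.sum_congr rfl fun i _ => ?_
  -- reduce to the κ-invariance of B_i
  set κ : H ⊗[k] (H ⊗[k] H) →ₗ[k] H ⊗[k] (H ⊗[k] H) :=
    (TensorProduct.assoc k H H H).toLinearMap
      ∘ₗ LinearMap.rTensor H (TensorProduct.comm k H H).toLinearMap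
      ∘ₗ (TensorProduct.assoc k H H H).symm.toLinearMap with hκ
  have κ_tmul : ∀ (a b d : H), κ (a ⊗ₜ[k] (b ⊗ₜ[k] d)) = b ⊗ₜ[k] (a ⊗ₜ[k] d) := by
    intro a b d; simp [hκ]
  set B : H ⊗[k] (H ⊗[k] H) := LinearMap.lTensor H (comul (R := k)) (comul (r.right i))
    with hB
  have hB1 : B = ∑ t ∈ (rr i).index, ∑ z ∈ (rrr i t).index,
      (rr i).left t ⊗ₜ[k] ((rrr i t).left z ⊗ₜ[k] (rrr i t).right z) :=
    lTensor_comul_expand (rr i) (rrr i)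
  set rrl : ∀ t, Repr k ((rr i).left t) (H × H) := fun t => ℛ k ((rr i).left t) with hrrl
  have hB2 : B = ∑ t ∈ (rr i).index, ∑ z ∈ (rrl t).index,
      (rrl t).left z ⊗ₜ[k] ((rrl t).right z ⊗ₜ[k] (rr i).right t) := by
    rw [hB, ← Coalgebra.coassoc_apply, rTensor_comul_expand (rr i) rrl, map_sum]
    exact Finset.sum_congr rfl fun t _ => by
      rw [map_sum]
      exact Finset.sum_congr rfl fun z _ => by simp
  have hκB : κ B = B := by
    conv_lhs => rw [hB2]
    conv_rhs => rw [hB2]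
    rw [map_sum]
    refine Finset.sum_congr rfl fun t _ => ?_
    rw [map_sum]
    have lhs_eq : ∑ z ∈ (rrl t).index,
        κ ((rrl t).left z ⊗ₜ[k] ((rrl t).right z ⊗ₜ[k] (rr i).right t))
        = ∑ z ∈ (rrl t).index,
            (rrl t).right z ⊗ₜ[k] ((rrl t).left z ⊗ₜ[k] (rr i).right t) := by
      exact Finset.sum_congr rfl fun z _ => κ_tmul _ _ _
    rw [lhs_eq]
    -- both sides are ψ_d applied to (τ Δ) resp. Δ of (rr i).left t
    set ψ : H ⊗[k] H →ₗ[k] H ⊗[k] (H ⊗[k] H) :=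
      LinearMap.lTensor H ((TensorProduct.mk k H H).flip ((rr i).right t)) with hψ
    have ψ_tmul : ∀ a b : H, ψ (a ⊗ₜ[k] b) = a ⊗ₜ[k] (b ⊗ₜ[k] (rr i).right t) := by
      intro a b; simp [hψ]
    have h1 : ∑ z ∈ (rrl t).index,
        (rrl t).right z ⊗ₜ[k] ((rrl t).left z ⊗ₜ[k] (rr i).right t)
        = ψ (TensorProduct.comm k H H (comul ((rr i).left t))) := by
      rw [← (rrl t).eq, map_sum, map_sum]
      exact Finset.sum_congr rfl fun z _ => by simp [ψ_tmul]
    have h2 : ∑ z ∈ (rrl t).index,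
        (rrl t).left z ⊗ₜ[k] ((rrl t).right z ⊗ₜ[k] (rr i).right t)
        = ψ (comul ((rr i).left t)) := by
      rw [← (rrl t).eq, map_sum]
      exact Finset.sum_congr rfl fun z _ => by simp [ψ_tmul]
    rw [h1, h2, hco]
  -- now conclude for the i-th summand
  set W : H ⊗[k] (H ⊗[k] H) →ₗ[k] (H ⊗[k] H) ⊗[k] (H ⊗[k] H) :=
    TensorProduct.map (TensorProduct.mk k H H (r.left i)) LinearMap.id with hW
  have W_tmul : ∀ (b : H) (w : H ⊗[k] H), W (b ⊗ₜ[k] w) = (r.left i ⊗ₜ[k] b) ⊗ₜ[k] w := by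
    intro b w; simp [hW]
  have hL : ∑ t ∈ (rr i).index, ∑ z ∈ (rrr i t).index,
      (r.left i ⊗ₜ[k] (rrr i t).left z) ⊗ₜ[k] ((rr i).left t ⊗ₜ[k] (rrr i t).right z)
      = W (κ B) := by
    rw [hB1, map_sum, map_sum]
    refine Finset.sum_congr rfl fun t _ => ?_
    rw [map_sum, map_sum]
    exact Finset.sum_congr rfl fun z _ => by rw [κ_tmul, W_tmul]
  have hR : ∑ t ∈ (rr i).index, ∑ z ∈ (rrr i t).index,
      (r.left i ⊗ₜ[k] (rr i).left t) ⊗ₜ[k] ((rrr i t).left z ⊗ₜ[k] (rrr i t).right z)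
      = W B := by
    rw [hB1, map_sum]
    refine Finset.sum_congr rfl fun t _ => ?_
    rw [map_sum]
    exact Finset.sum_congr rfl fun z _ => by rw [W_tmul]
  rw [hL, hR, hκB]

/-- Sweedler middle-swap: `Σ c₍₁₁₎⊗c₍₁₂₎⊗c₍₂₁₎⊗c₍₂₂₎ = Σ c₍₁₁₎⊗c₍₂₁₎⊗c₍₁₂₎⊗c₍₂₂₎`. -/
lemma middle_swap (hco : ∀ x : H, TensorProduct.comm k H H (comul (R := k) x) = comul x)
    {c : H} {ιr : Type*} {κ Λ : ιr → Type*} (r : Repr k c ιr)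
    (rl : ∀ i, Repr k (r.left i) (κ i)) (rr : ∀ i, Repr k (r.right i) (Λ i)) :
    ∑ i ∈ r.index, ∑ s ∈ (rl i).index, ∑ t ∈ (rr i).index,
      ((rl i).left s ⊗ₜ[k] (rl i).right s) ⊗ₜ[k] ((rr i).left t ⊗ₜ[k] (rr i).right t)
    = ∑ i ∈ r.index, ∑ s ∈ (rl i).index, ∑ t ∈ (rr i).index,
      ((rl i).left s ⊗ₜ[k] (rr i).left t) ⊗ₜ[k] ((rl i).right s ⊗ₜ[k] (rr i).right t) := by
  have hL := (map_comul_comul_expand r rl rr).symm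
  have hR : ∑ i ∈ r.index, ∑ s ∈ (rl i).index, ∑ t ∈ (rr i).index,
      ((rl i).left s ⊗ₜ[k] (rr i).left t) ⊗ₜ[k] ((rl i).right s ⊗ₜ[k] (rr i).right t)
      = tensorTensorTensorComm k H H H H
          (TensorProduct.map (comul (R := k)) (comul (R := k)) (comul c)) := by
    rw [map_comul_comul_expand r rl rr]
    simp only [map_sum, tensorTensorTensorComm_tmul]
  rw [hR, map_comul_comul_ttc_invariant hco c, hL]

end Expand

section Hopf
variable {H : Type*} [Ring H] [HopfAlgebra k H]

/-- `Σ e₍₁₎ ⊗ (e₍₂₎ · S e₍₃₎) = e ⊗ 1`. -/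
lemma sum_tmul_mul_antipode {e : H} {ιr : Type*} {κ : ιr → Type*} (r : Repr k e ιr)
    (rl : ∀ i, Repr k (r.left i) (κ i)) :
    ∑ i ∈ r.index, ∑ t ∈ (rl i).index,
      (rl i).left t ⊗ₜ[k] ((rl i).right t * antipode (R := k) (r.right i))
    = e ⊗ₜ[k] (1 : H) := by
  classical
  set rr : ∀ i, Repr k (r.right i) (H × H) := fun i => ℛ k (r.right i) with hrr
  have J := sum_tmul_tmul_eq r rl rr
  have h := congrArg
    (LinearMap.lTensor H (mul' k H ∘ₗ (antipode (R := k) (A := H)).lTensor H)) J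
  simp only [map_sum, LinearMap.lTensor_tmul, LinearMap.coe_comp, Function.comp_apply,
    LinearMap.mul'_apply] at h
  rw [h]
  have : ∀ i ∈ r.index, ∑ j ∈ (rr i).index,
      r.left i ⊗ₜ[k] ((rr i).left j * antipode (R := k) ((rr i).right j))
      = counit (R := k) (r.right i) • (r.left i ⊗ₜ[k] (1 : H)) := by
    intro i _
    rw [← tmul_sum, sum_mul_antipode_eq_smul (rr i), tmul_smul]
  rw [Finset.sum_congr rfl this]
  have : ∑ i ∈ r.index, counit (R := k) (r.right i) • (r.left i ⊗ₜ[k] (1 : H))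
      = (∑ i ∈ r.index, counit (R := k) (r.right i) • r.left i) ⊗ₜ[k] (1 : H) := by
    rw [sum_tmul]
    exact Finset.sum_congr rfl fun i _ => by rw [smul_tmul']
  rw [this, sum_counit_smul_left r]

/-- `Σ (e₍₁₎ · S e₍₂₎) ⊗ e₍₃₎ = 1 ⊗ e`. -/
lemma sum_mul_antipode_tmul {e : H} {ιr : Type*} {Λ : ιr → Type*} (r : Repr k e ιr)
    (rr : ∀ i, Repr k (r.right i) (Λ i)) :
    ∑ i ∈ r.index, ∑ u ∈ (rr i).index,
      (r.left i * antipode (R := k) ((rr i).left u)) ⊗ₜ[k] (rr i).right u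
    = (1 : H) ⊗ₜ[k] e := by
  classical
  set rl : ∀ i, Repr k (r.left i) (H × H) := fun i => ℛ k (r.left i) with hrl
  have J := sum_tmul_tmul_eq r rl rr
  set κ : H ⊗[k] (H ⊗[k] H) →ₗ[k] H ⊗[k] H :=
    TensorProduct.map (mul' k H ∘ₗ (antipode (R := k) (A := H)).lTensor H) LinearMap.id
      ∘ₗ (TensorProduct.assoc k H H H).symm.toLinearMap with hκ
  have κ_tmul : ∀ a b d : H, κ (a ⊗ₜ[k] (b ⊗ₜ[k] d)) = (a * antipode (R := k) b) ⊗ₜ[k] d := by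
    intro a b d; simp [hκ]
  have h := congrArg κ J
  simp only [map_sum, κ_tmul] at h
  rw [← h]
  have : ∀ i ∈ r.index, ∑ j ∈ (rl i).index,
      ((rl i).left j * antipode (R := k) ((rl i).right j)) ⊗ₜ[k] r.right i
      = counit (R := k) (r.left i) • ((1 : H) ⊗ₜ[k] r.right i) := by
    intro i _
    rw [← sum_tmul, sum_mul_antipode_eq_smul (rl i), smul_tmul']
  rw [Finset.sum_congr rfl this]
  have : ∑ i ∈ r.index, counit (R := k) (r.left i) • ((1 : H) ⊗ₜ[k] r.right i)
      = (1 : H) ⊗ₜ[k] (∑ i ∈ r.index, counit (R := k) (r.left i) • r.right i) := by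
    rw [tmul_sum]
    exact Finset.sum_congr rfl fun i _ => by rw [tmul_smul]
  rw [this, sum_counit_smul_right r]

/-- Antipode is an anti-homomorphism of algebras. -/
lemma antipode_mul_antidistrib (x y : H) :
    antipode (R := k) (x * y) = antipode (R := k) y * antipode (R := k) x := by
  classical
  set rx : Repr k x (H × H) := ℛ k x with hrx
  set ry : Repr k y (H × H) := ℛ k y with hry
  set rxl : ∀ i, Repr k (rx.left i) (H × H) := fun i => ℛ k (rx.left i) with hrxl
  set ryl : ∀ j, Repr k (ry.left j) (H × H) := fun j => ℛ k (ry.left j) with hryl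
  set Q : H := ∑ i ∈ rx.index, ∑ s ∈ (rxl i).index, ∑ j ∈ ry.index, ∑ t ∈ (ryl j).index,
    antipode (R := k) ((rxl i).left s * (ryl j).left t) *
      (((rxl i).right s * ((ryl j).right t * antipode (R := k) (ry.right j))) *
        antipode (R := k) (rx.right i)) with hQ
  have hB : Q = antipode (R := k) (x * y) := by
    rw [hQ]
    have step1 : ∀ i ∈ rx.index, ∀ s ∈ (rxl i).index,
        ∑ j ∈ ry.index, ∑ t ∈ (ryl j).index,
          antipode (R := k) ((rxl i).left s * (ryl j).left t) *
            (((rxl i).right s * ((ryl j).right t * antipode (R := k) (ry.right j))) *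
              antipode (R := k) (rx.right i))
        = antipode (R := k) ((rxl i).left s * y) *
            (((rxl i).right s * 1) * antipode (R := k) (rx.right i)) := by
      intro i _ s _
      set F : H ⊗[k] H →ₗ[k] H :=
        mul' k H ∘ₗ TensorProduct.map
          ((antipode (R := k) (A := H)) ∘ₗ LinearMap.mulLeft k ((rxl i).left s))
          (LinearMap.mulRight k (antipode (R := k) (rx.right i))
            ∘ₗ LinearMap.mulLeft k ((rxl i).right s)) with hF
      have F_tmul : ∀ a b : H, F (a ⊗ₜ[k] b)
          = antipode (R := k) ((rxl i).left s * a) *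
              (((rxl i).right s * b) * antipode (R := k) (rx.right i)) := by
        intro a b; simp [hF]
      have h := congrArg F (sum_tmul_mul_antipode ry ryl)
      simp only [map_sum, F_tmul] at h
      exact h
    calc ∑ i ∈ rx.index, ∑ s ∈ (rxl i).index, ∑ j ∈ ry.index, ∑ t ∈ (ryl j).index,
          antipode (R := k) ((rxl i).left s * (ryl j).left t) *
            (((rxl i).right s * ((ryl j).right t * antipode (R := k) (ry.right j))) *
              antipode (R := k) (rx.right i))
        = ∑ i ∈ rx.index, ∑ s ∈ (rxl i).index,
            antipode (R := k) ((rxl i).left s * y) *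
              (((rxl i).right s * 1) * antipode (R := k) (rx.right i)) := by
          refine Finset.sum_congr rfl fun i hi => Finset.sum_congr rfl fun s hs => ?_
          exact step1 i hi s hs
      _ = antipode (R := k) (x * y) := by
          set F₂ : H ⊗[k] H →ₗ[k] H :=
            mul' k H ∘ₗ TensorProduct.map
              ((antipode (R := k) (A := H)) ∘ₗ LinearMap.mulRight k y) LinearMap.id with hF₂
          have F₂_tmul : ∀ a b : H, F₂ (a ⊗ₜ[k] b) = antipode (R := k) (a * y) * b := by
            intro a b; simp [hF₂]
          have h := congrArg F₂ (sum_tmul_mul_antipode rx rxl)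
          simp only [map_sum, F₂_tmul] at h
          rw [mul_one] at h
          simpa only [mul_one] using h
  have hA : Q = antipode (R := k) y * antipode (R := k) x := by
    rw [hQ]
    have step1 : ∀ i ∈ rx.index, ∀ j ∈ ry.index,
        ∑ s ∈ (rxl i).index, ∑ t ∈ (ryl j).index,
          antipode (R := k) ((rxl i).left s * (ryl j).left t) *
            (((rxl i).right s * ((ryl j).right t * antipode (R := k) (ry.right j))) *
              antipode (R := k) (rx.right i))
        = (counit (R := k) (rx.left i) * counit (R := k) (ry.left j)) •
            (antipode (R := k) (ry.right j) * antipode (R := k) (rx.right i)) := by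
      intro i _ j _
      set d : H := antipode (R := k) (ry.right j) * antipode (R := k) (rx.right i) with hd
      have expand : ∀ s ∈ (rxl i).index, ∀ t ∈ (ryl j).index,
          antipode (R := k) ((rxl i).left s * (ryl j).left t) *
            (((rxl i).right s * ((ryl j).right t * antipode (R := k) (ry.right j))) *
              antipode (R := k) (rx.right i))
          = antipode (R := k) ((ReprMul (rxl i) (ryl j)).left (s, t)) *
              ((ReprMul (rxl i) (ryl j)).right (s, t) * d) := by
        intro s _ t _
        show antipode (R := k) ((rxl i).left s * (ryl j).left t) * _
          = antipode (R := k) ((rxl i).left s * (ryl j).left t) *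
              (((rxl i).right s * (ryl j).right t) * d)
        rw [hd]
        simp only [mul_assoc]
      rw [Finset.sum_congr rfl (fun s hs => Finset.sum_congr rfl (fun t ht => expand s hs t ht))]
      rw [← Finset.sum_product']
      have : ∑ p ∈ (rxl i).index ×ˢ (ryl j).index,
          antipode (R := k) ((ReprMul (rxl i) (ryl j)).left p) *
            ((ReprMul (rxl i) (ryl j)).right p * d)
          = (∑ p ∈ (rxl i).index ×ˢ (ryl j).index,
              antipode (R := k) ((ReprMul (rxl i) (ryl j)).left p) *
                (ReprMul (rxl i) (ryl j)).right p) * d := by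
        rw [Finset.sum_mul]
        exact Finset.sum_congr rfl fun p _ => by rw [mul_assoc]
      rw [this]
      have this2 : (∑ p ∈ (rxl i).index ×ˢ (ryl j).index,
          antipode (R := k) ((ReprMul (rxl i) (ryl j)).left p) *
            (ReprMul (rxl i) (ryl j)).right p)
          = counit (R := k) (rx.left i * ry.left j) • (1 : H) :=
        sum_antipode_mul_eq_smul (ReprMul (rxl i) (ryl j))
      rw [this2, Bialgebra.counit_mul, smul_mul_assoc, one_mul]
    have swap : Q = ∑ i ∈ rx.index, ∑ j ∈ ry.index, ∑ s ∈ (rxl i).index, ∑ t ∈ (ryl j).index,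
        antipode (R := k) ((rxl i).left s * (ryl j).left t) *
          (((rxl i).right s * ((ryl j).right t * antipode (R := k) (ry.right j))) *
            antipode (R := k) (rx.right i)) := by
      rw [hQ]
      exact Finset.sum_congr rfl fun i _ => Finset.sum_comm
    rw [← hQ, swap]
    rw [Finset.sum_congr rfl (fun i hi => Finset.sum_congr rfl (fun j hj => step1 i hi j hj))]
    have inner : ∀ i ∈ rx.index,
        ∑ j ∈ ry.index, (counit (R := k) (rx.left i) * counit (R := k) (ry.left j)) •
            (antipode (R := k) (ry.right j) * antipode (R := k) (rx.right i))
        = counit (R := k) (rx.left i) •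
            (antipode (R := k) y * antipode (R := k) (rx.right i)) := by
      intro i _
      have e1 : ∀ j ∈ ry.index, (counit (R := k) (rx.left i) * counit (R := k) (ry.left j)) •
            (antipode (R := k) (ry.right j) * antipode (R := k) (rx.right i))
          = counit (R := k) (rx.left i) •
              ((counit (R := k) (ry.left j) • antipode (R := k) (ry.right j)) *
                antipode (R := k) (rx.right i)) := by
        intro j _; rw [mul_smul, smul_mul_assoc]
      rw [Finset.sum_congr rfl e1, ← Finset.smul_sum, ← Finset.sum_mul]
      have e2 : ∑ j ∈ ry.index, counit (R := k) (ry.left j) • antipode (R := k) (ry.right j)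
          = antipode (R := k) y := by
        rw [Finset.sum_congr rfl (fun j (_ : j ∈ ry.index) =>
          (map_smul (antipode (R := k) (A := H)) _ _).symm), ← map_sum,
          sum_counit_smul_right ry]
      rw [e2]
    rw [Finset.sum_congr rfl inner]
    have e3 : ∀ i ∈ rx.index, counit (R := k) (rx.left i) •
        (antipode (R := k) y * antipode (R := k) (rx.right i))
        = antipode (R := k) y * (counit (R := k) (rx.left i) • antipode (R := k) (rx.right i)) :=
      fun i _ => (mul_smul_comm _ _ _).symm
    rw [Finset.sum_congr rfl e3, ← Finset.mul_sum]
    congr 1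
    rw [Finset.sum_congr rfl (fun i (_ : i ∈ rx.index) =>
      (map_smul (antipode (R := k) (A := H)) _ _).symm), ← map_sum, sum_counit_smul_right rx]
  rw [← hB, hA]

/-- For cocommutative `H`: `Δ ∘ S = (S ⊗ S) ∘ Δ`. -/
lemma comul_antipode (hco : ∀ x : H, TensorProduct.comm k H H (comul (R := k) x) = comul x)
    (c : H) :
    comul (R := k) (antipode (R := k) c)
      = TensorProduct.map (antipode (R := k)) (antipode (R := k)) (comul c) := by
  classical
  set f : H ⊗[k] H →ₗ[k] H := mul' k H ∘ₗ (antipode (R := k) (A := H)).lTensor H with hf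
  have f_tmul : ∀ a b : H, f (a ⊗ₜ[k] b) = a * antipode (R := k) b := by
    intro a b; simp [hf]
  have main : (comul (R := k) (A := H)) ∘ₗ (antipode (R := k) (A := H))
      = TensorProduct.map (antipode (R := k)) (antipode (R := k)) ∘ₗ comul (R := k) := by
    refine conv_inv_unique (A := H ⊗[k] H) (f := comul (R := k) (A := H))
      (comul (R := k) (A := H)) (counit (R := k) (A := H))
      (fun w => Coalgebra.coassoc_apply w) (fun w => Coalgebra.rTensor_counit_comul w)
      (fun w => Coalgebra.lTensor_counit_comul w) ?h1 ?h2
    case h1 =>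
      ext c
      rw [conv_apply, convOne_apply]
      set r : Repr k c (H × H) := ℛ k c with hrdef
      rw [← r.eq]
      simp only [map_sum, TensorProduct.map_tmul, LinearMap.coe_comp, Function.comp_apply,
        LinearMap.mul'_apply]
      have e1 : ∀ i ∈ r.index,
          comul (R := k) (antipode (R := k) (r.left i)) * comul (R := k) (r.right i)
          = comul (R := k) (antipode (R := k) (r.left i) * r.right i) := fun i _ =>
        (Bialgebra.comul_mul _ _).symm
      rw [Finset.sum_congr rfl e1, ← map_sum, sum_antipode_mul_eq_algebraMap_counit r,
        Bialgebra.comul_algebraMap]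
    case h2 =>
      ext c
      rw [conv_apply, convOne_apply]
      set r : Repr k c (H × H) := ℛ k c with hrdef
      set rl : ∀ i, Repr k (r.left i) (H × H) := fun i => ℛ k (r.left i) with hrl
      set rr : ∀ i, Repr k (r.right i) (H × H) := fun i => ℛ k (r.right i) with hrr
      have pure : ∀ a b : k,
          (algebraMap k H a) ⊗ₜ[k] (algebraMap k H b) = algebraMap k (H ⊗[k] H) (a * b) := by
        intro a b
        simp [Algebra.TensorProduct.algebraMap_apply, Algebra.algebraMap_eq_smul_one,
          TensorProduct.smul_tmul', TensorProduct.tmul_smul, smul_smul,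
          Algebra.TensorProduct.one_def, mul_comm a b]
      rw [← r.eq]
      simp only [map_sum, TensorProduct.map_tmul, LinearMap.coe_comp, Function.comp_apply,
        LinearMap.mul'_apply]
      have expand : ∀ i ∈ r.index,
          comul (R := k) (r.left i) *
            (TensorProduct.map (antipode (R := k)) (antipode (R := k))
              (comul (R := k) (r.right i)))
          = ∑ s ∈ (rl i).index, ∑ t ∈ (rr i).index,
              ((rl i).left s * antipode (R := k) ((rr i).left t)) ⊗ₜ[k]
                ((rl i).right s * antipode (R := k) ((rr i).right t)) := by
        intro i _
        rw [← (rl i).eq, ← (rr i).eq, map_sum, Finset.sum_mul_sum]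
        simp [Algebra.TensorProduct.tmul_mul_tmul]
      rw [Finset.sum_congr rfl expand]
      have key := congrArg (TensorProduct.map f f) (middle_swap hco r rl rr)
      simp only [map_sum, TensorProduct.map_tmul, f_tmul] at key
      rw [← key]
      have contract : ∀ i ∈ r.index,
          ∑ s ∈ (rl i).index, ∑ t ∈ (rr i).index,
            ((rl i).left s * antipode (R := k) ((rl i).right s)) ⊗ₜ[k]
              ((rr i).left t * antipode (R := k) ((rr i).right t))
          = Algebra.linearMap k (H ⊗[k] H)
              (counit (R := k) (r.left i) * counit (R := k) (r.right i)) := by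
        intro i _
        rw [Finset.sum_congr rfl (fun s (_ : s ∈ (rl i).index) =>
          (TensorProduct.tmul_sum _ _ _).symm), ← TensorProduct.sum_tmul,
          sum_mul_antipode_eq_algebraMap_counit (rl i), sum_mul_antipode_eq_algebraMap_counit (rr i)]
        rw [Algebra.linearMap_apply]
        exact pure _ _
      rw [Finset.sum_congr rfl contract, ← map_sum]
      have : ∑ i ∈ r.index, counit (R := k) (r.left i) * counit (R := k) (r.right i)
          = counit (R := k) c := by
        have e : ∀ i ∈ r.index, counit (R := k) (r.left i) * counit (R := k) (r.right i)
            = counit (R := k) (counit (R := k) (r.left i) • r.right i) := by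
          intro i _; rw [map_smul, smul_eq_mul]
        rw [Finset.sum_congr rfl e, ← map_sum, sum_counit_smul_right r]
      rw [this, Algebra.linearMap_apply]
  exact LinearMap.congr_fun main c

/-- Key contraction: `Σ c₍₁₁₎ ⊗ c₍₂₁₎ ⊗ (S c₍₁₂₎ · c₍₂₂₎) = Σ c₍₁₎ ⊗ c₍₂₎ ⊗ 1`
for cocommutative `H`. -/
lemma sum_dagger (hco : ∀ x : H, TensorProduct.comm k H H (comul (R := k) x) = comul x)
    {c : H} {ιr : Type*} {κ Λ : ιr → Type*} (r : Repr k c ιr)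
    (rl : ∀ i, Repr k (r.left i) (κ i)) (rr : ∀ i, Repr k (r.right i) (Λ i)) :
    ∑ i ∈ r.index, ∑ s ∈ (rl i).index, ∑ t ∈ (rr i).index,
      (rl i).left s ⊗ₜ[k]
        ((rr i).left t ⊗ₜ[k] (antipode (R := k) ((rl i).right s) * (rr i).right t))
    = ∑ i ∈ r.index, r.left i ⊗ₜ[k] (r.right i ⊗ₜ[k] (1 : H)) := by
  classical
  set Ω : (H ⊗[k] H) ⊗[k] (H ⊗[k] H) →ₗ[k] H ⊗[k] (H ⊗[k] H) :=
    (TensorProduct.assoc k H H H).toLinearMap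
      ∘ₗ LinearMap.lTensor (H ⊗[k] H) (mul' k H ∘ₗ (antipode (R := k) (A := H)).rTensor H)
      ∘ₗ (tensorTensorTensorComm k H H H H).toLinearMap with hΩ
  have Ω_tmul : ∀ x y u v : H,
      Ω ((x ⊗ₜ[k] y) ⊗ₜ[k] (u ⊗ₜ[k] v))
        = x ⊗ₜ[k] (u ⊗ₜ[k] (antipode (R := k) y * v)) := by
    intro x y u v; simp [hΩ]
  have key := congrArg Ω (middle_swap hco r rl rr)
  simp only [map_sum, Ω_tmul] at key
  rw [key]
  set ψ : H ⊗[k] H →ₗ[k] H ⊗[k] (H ⊗[k] H) :=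
    LinearMap.lTensor H ((TensorProduct.mk k H H).flip (1 : H)) with hψ
  have ψ_tmul : ∀ a b : H, ψ (a ⊗ₜ[k] b) = a ⊗ₜ[k] (b ⊗ₜ[k] (1 : H)) := by
    intro a b; simp [hψ]
  have contract : ∀ i ∈ r.index,
      ∑ s ∈ (rl i).index, ∑ t ∈ (rr i).index,
        (rl i).left s ⊗ₜ[k]
          ((rl i).right s ⊗ₜ[k] (antipode (R := k) ((rr i).left t) * (rr i).right t))
      = counit (R := k) (r.right i) • ψ (comul (R := k) (r.left i)) := by
    intro i _
    have e1 : ∀ s ∈ (rl i).index,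
        ∑ t ∈ (rr i).index,
          (rl i).left s ⊗ₜ[k]
            ((rl i).right s ⊗ₜ[k] (antipode (R := k) ((rr i).left t) * (rr i).right t))
        = counit (R := k) (r.right i) •
            ((rl i).left s ⊗ₜ[k] ((rl i).right s ⊗ₜ[k] (1 : H))) := by
      intro s _
      rw [← TensorProduct.tmul_sum, ← TensorProduct.tmul_sum,
        sum_antipode_mul_eq_smul (rr i), TensorProduct.tmul_smul, TensorProduct.tmul_smul]
    rw [Finset.sum_congr rfl e1, ← Finset.smul_sum]
    congr 1
    rw [← (rl i).eq, map_sum]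
    exact Finset.sum_congr rfl fun s _ => (ψ_tmul _ _).symm
  rw [Finset.sum_congr rfl contract]
  have : ∑ i ∈ r.index, counit (R := k) (r.right i) • ψ (comul (R := k) (r.left i))
      = ψ (comul (R := k) c) := by
    have e : ∀ i ∈ r.index, counit (R := k) (r.right i) • ψ (comul (R := k) (r.left i))
        = ψ (comul (R := k) (counit (R := k) (r.right i) • r.left i)) := by
      intro i _; rw [map_smul, map_smul]
    rw [Finset.sum_congr rfl e, ← map_sum, ← map_sum, sum_counit_smul_left r]
  rw [this, ← r.eq, map_sum]
  exact Finset.sum_congr rfl fun i _ => ψ_tmul _ _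

/-- Representation of `S c` obtained from one of `c` (cocommutative case). -/
noncomputable def ReprAntipode (hco : ∀ x : H, TensorProduct.comm k H H (comul (R := k) x) = comul x)
    {c : H} {ιr : Type*} (r : Repr k c ιr) : Repr k (antipode (R := k) c) ιr where
  index := r.index
  left := fun i => antipode (R := k) (r.left i)
  right := fun i => antipode (R := k) (r.right i)
  eq := by
    rw [comul_antipode hco, ← r.eq, map_sum]
    simp

end Hopf


end MaschkeSplittingAux


section

variable (k : Type*) [Field k]
variable (J : Type*) [Ring J] [HopfAlgebra k J]
variable (K : Type*) [Ring K] [HopfAlgebra k K]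

/-- The map `J ⊗ K → J`, `a ⊗ c ↦ a·ι(c)`. -/
noncomputable def mulByK (ι : K →ₐ[k] J) : J ⊗[k] K →ₗ[k] J :=
  LinearMap.mul' k J ∘ₗ LinearMap.lTensor J ι.toLinearMap

/-- The map `M ⊗ K → M ⊗ J`, `m ⊗ c ↦ (m⁽⁰⁾ · c₍₁₎) ⊗ m⁽¹⁾·ι(c₍₂₎)`, expressing the
`Mod_K^J`-compatibility of a right `K`-action and a right `J`-coaction on `M`. -/
noncomputable def diagCoaction (ι : K →ₐ[k] J) {M : Type*} [AddCommGroup M] [Module k M]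
    (actM : M →ₗ[k] K →ₗ[k] M) (ρM : M →ₗ[k] M ⊗[k] J) : M ⊗[k] K →ₗ[k] M ⊗[k] J :=
  TensorProduct.map (TensorProduct.lift actM) (mulByK k J K ι)
    ∘ₗ (TensorProduct.tensorTensorTensorComm k M J K K).toLinearMap
    ∘ₗ TensorProduct.map ρM (Coalgebra.comul (R := k) (A := K))

/-- Auxiliary: evaluation of `diagCoaction` on a pure tensor, via a chosen
representation of the comultiplication. -/
lemma diagCoaction_repr (ι : K →ₐ[k] J) {M : Type*} [AddCommGroup M] [Module k M]
    (actM : M →ₗ[k] K →ₗ[k] M) (ρM : M →ₗ[k] M ⊗[k] J) (m : M) {c : K}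
    {ιc : Type*} (rc : Coalgebra.Repr k c ιc) :
    diagCoaction k J K ι actM ρM (m ⊗ₜ[k] c)
      = ∑ t ∈ rc.index,
          (TensorProduct.map (actM.flip (rc.left t))
            (LinearMap.mulRight k (ι (rc.right t)))) (ρM m) := by
  have key : ∀ (x y : K) (w : M ⊗[k] J),
      (TensorProduct.map (TensorProduct.lift actM) (mulByK k J K ι))
        ((TensorProduct.tensorTensorTensorComm k M J K K) (w ⊗ₜ[k] (x ⊗ₜ[k] y)))
      = (TensorProduct.map (actM.flip x) (LinearMap.mulRight k (ι y))) w := by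
    intro x y w
    induction w using TensorProduct.induction_on with
    | zero => simp
    | tmul a b => simp [mulByK]
    | add u v hu hv => simp only [TensorProduct.add_tmul, map_add, hu, hv]
  have expand : diagCoaction k J K ι actM ρM (m ⊗ₜ[k] c)
      = (TensorProduct.map (TensorProduct.lift actM) (mulByK k J K ι))
          ((TensorProduct.tensorTensorTensorComm k M J K K)
            (ρM m ⊗ₜ[k] Coalgebra.comul (R := k) c)) := by
    simp [diagCoaction]
  rw [expand, ← rc.eq, TensorProduct.tmul_sum, map_sum, map_sum]
  exact Finset.sum_congr rfl fun t _ => key _ _ _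


/-- Pointwise form of the `Mod_K^J`-compatibility. -/
lemma act_coact (ι : K →ₐ[k] J) {M : Type*} [AddCommGroup M] [Module k M]
    (actM : M →ₗ[k] K →ₗ[k] M) (ρM : M →ₗ[k] M ⊗[k] J)
    (hcompat : ρM ∘ₗ TensorProduct.lift actM = diagCoaction k J K ι actM ρM)
    (m : M) {c : K} {ιc : Type*} (rc : Coalgebra.Repr k c ιc) :
    ρM (actM m c) = ∑ t ∈ rc.index,
      (TensorProduct.map (actM.flip (rc.left t))
        (LinearMap.mulRight k (ι (rc.right t)))) (ρM m) := by
  have h := LinearMap.congr_fun hcompat (m ⊗ₜ[k] c)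
  rw [LinearMap.comp_apply, TensorProduct.lift.tmul] at h
  rw [h, diagCoaction_repr k J K ι actM ρM m rc]

/-- The candidate section, as a map `N ⊗ J → M`:
`n ⊗ a ↦ Σ s₀(n · S(ξa)₍₁₎) · (ξa)₍₂₎`. -/
noncomputable def auxSec {M N : Type*} [AddCommGroup M] [Module k M]
    [AddCommGroup N] [Module k N]
    (actM : M →ₗ[k] K →ₗ[k] M) (actN : N →ₗ[k] K →ₗ[k] N)
    (s₀ : N →ₗ[k] M) (ξ : J →ₗ[k] K) : N ⊗[k] J →ₗ[k] M :=
  TensorProduct.lift actM ∘ₗ s₀.rTensor K ∘ₗ (TensorProduct.lift actN).rTensor K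
    ∘ₗ (TensorProduct.assoc k N K K).symm.toLinearMap
    ∘ₗ LinearMap.lTensor N ((HopfAlgebra.antipode (R := k) (A := K)).rTensor K
        ∘ₗ (Coalgebra.comul (R := k) (A := K)) ∘ₗ ξ)

lemma auxSec_tmul {M N : Type*} [AddCommGroup M] [Module k M]
    [AddCommGroup N] [Module k N]
    (actM : M →ₗ[k] K →ₗ[k] M) (actN : N →ₗ[k] K →ₗ[k] N)
    (s₀ : N →ₗ[k] M) (ξ : J →ₗ[k] K) (m : N) (a : J) {c : K}
    (hc : ξ a = c) {ιc : Type*} (rc : Coalgebra.Repr k c ιc) :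
    auxSec k J K actM actN s₀ ξ (m ⊗ₜ[k] a)
      = ∑ t ∈ rc.index,
          actM (s₀ (actN m (HopfAlgebra.antipode (R := k) (rc.left t)))) (rc.right t) := by
  rw [auxSec]
  simp only [LinearMap.comp_apply, LinearMap.lTensor_tmul, LinearMap.coe_comp,
    Function.comp_apply]
  rw [show ξ a = c from hc, ← rc.eq, map_sum, TensorProduct.tmul_sum, map_sum, map_sum,
    map_sum, map_sum]
  exact Finset.sum_congr rfl fun t _ => by
    simp only [LinearMap.rTensor_tmul, TensorProduct.assoc_symm_tmul,
      LinearEquiv.coe_coe, TensorProduct.lift.tmul]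

set_option maxHeartbeats 2000000 in
/-- Maschke-type splitting: let `K ⊆ J` be a Hopf subalgebra of a
cocommutative Hopf algebra `J` such that `J` is projective as a right `K`-module.  If a
surjection `p : M → N` in the category `Mod_K^J` (right `K`-modules with compatible right
`J`-coactions) splits `J`-colinearly, then it splits in `Mod_K^J`, i.e. it admits a
section that is simultaneously `K`-linear and `J`-colinear. -/
theorem maschke_type_splitting (hchar : ringChar k ≠ 2)
    (hcocommJ : ∀ a : J, (TensorProduct.comm k J J) (Coalgebra.comul a) = Coalgebra.comul a)
    (hcocommK : ∀ c : K, (TensorProduct.comm k K K) (Coalgebra.comul c) = Coalgebra.comul c)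
    (ι : K →ₐ[k] J) (hinj : Function.Injective ι)
    (hιcomul : Coalgebra.comul (R := k) (A := J) ∘ₗ ι.toLinearMap
        = TensorProduct.map ι.toLinearMap ι.toLinearMap ∘ₗ Coalgebra.comul (R := k) (A := K))
    (hιcounit : Coalgebra.counit (R := k) (A := J) ∘ₗ ι.toLinearMap
        = Coalgebra.counit (R := k) (A := K))
    -- `J` is projective as a right `K`-module (via `ι` and right multiplication)
    (hproj : @Module.Projective Kᵐᵒᵖ _ J _ (Module.compHom J (RingHom.op ι.toRingHom)))
    -- `M` is an object of `Mod_K^J`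
    (M : Type*) [AddCommGroup M] [Module k M]
    (actM : M →ₗ[k] K →ₗ[k] M)
    (hactM1 : ∀ m : M, actM m 1 = m)
    (hactMmul : ∀ (m : M) (c d : K), actM (actM m c) d = actM m (c * d))
    (ρM : M →ₗ[k] M ⊗[k] J)
    (hcounitM : ∀ m : M,
      (TensorProduct.rid k M) (((Coalgebra.counit (R := k) (A := J)).lTensor M) (ρM m)) = m)
    (hcoassocM : (TensorProduct.assoc k M J J).toLinearMap ∘ₗ ρM.rTensor J ∘ₗ ρM
        = (Coalgebra.comul (R := k) (A := J)).lTensor M ∘ₗ ρM)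
    (hcompatM : ρM ∘ₗ TensorProduct.lift actM = diagCoaction k J K ι actM ρM)
    -- `N` is an object of `Mod_K^J`
    (N : Type*) [AddCommGroup N] [Module k N]
    (actN : N →ₗ[k] K →ₗ[k] N)
    (hactN1 : ∀ n : N, actN n 1 = n)
    (hactNmul : ∀ (n : N) (c d : K), actN (actN n c) d = actN n (c * d))
    (ρN : N →ₗ[k] N ⊗[k] J)
    (hcounitN : ∀ n : N,
      (TensorProduct.rid k N) (((Coalgebra.counit (R := k) (A := J)).lTensor N) (ρN n)) = n)
    (hcoassocN : (TensorProduct.assoc k N J J).toLinearMap ∘ₗ ρN.rTensor J ∘ₗ ρN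
        = (Coalgebra.comul (R := k) (A := J)).lTensor N ∘ₗ ρN)
    (hcompatN : ρN ∘ₗ TensorProduct.lift actN = diagCoaction k J K ι actN ρN)
    -- `p : M → N` is a surjective morphism of `Mod_K^J`
    (p : M →ₗ[k] N)
    (hpsurj : Function.Surjective p)
    (hpK : p ∘ₗ TensorProduct.lift actM = TensorProduct.lift actN ∘ₗ p.rTensor K)
    (hpJ : ρN ∘ₗ p = p.rTensor J ∘ₗ ρM)
    -- `p` splits `J`-colinearly
    (hsplit : ∃ s₀ : N →ₗ[k] M, p ∘ₗ s₀ = LinearMap.id ∧ ρM ∘ₗ s₀ = s₀.rTensor J ∘ₗ ρN) :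
    -- then `p` splits in `Mod_K^J`
    ∃ s : N →ₗ[k] M,
      p ∘ₗ s = LinearMap.id ∧
      s ∘ₗ TensorProduct.lift actN = TensorProduct.lift actM ∘ₗ s.rTensor K ∧
      ρM ∘ₗ s = s.rTensor J ∘ₗ ρN := by
  classical
  obtain ⟨s₀, hs₀p, hs₀J⟩ := hsplit
  -- ### Construction of the `K`-linear functional `ξ : J → K` with `ε_K ∘ ξ = ε_J`
  letI instJ : Module Kᵐᵒᵖ J := Module.compHom J (RingHom.op ι.toRingHom)
  letI instk : Module Kᵐᵒᵖ k :=
    Module.compHom k (RingHom.fromOpposite (Bialgebra.counitAlgHom k K).toRingHom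
      (fun _ _ => Commute.all _ _))
  haveI : Module.Projective Kᵐᵒᵖ J := hproj
  have smulJ : ∀ (r : Kᵐᵒᵖ) (a : J), r • a = a * ι r.unop := fun _ _ => rfl
  have smulk : ∀ (r : Kᵐᵒᵖ) (t : k),
      r • t = Coalgebra.counit (R := k) r.unop * t := fun _ _ => rfl
  have smulK : ∀ (r : Kᵐᵒᵖ) (x : K), r • x = x * r.unop := fun _ _ => rfl
  have counit_ι : ∀ c : K, Coalgebra.counit (R := k) (ι c) = Coalgebra.counit (R := k) c :=
    fun c => LinearMap.congr_fun hιcounit c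
  let εJ' : J →ₗ[Kᵐᵒᵖ] k :=
    { toFun := fun a => Coalgebra.counit (R := k) a
      map_add' := fun a b => map_add _ a b
      map_smul' := by
        intro r a
        rw [smulJ, RingHom.id_apply, smulk, Bialgebra.counit_mul, counit_ι, mul_comm] }
  let εK' : K →ₗ[Kᵐᵒᵖ] k :=
    { toFun := fun x => Coalgebra.counit (R := k) x
      map_add' := fun a b => map_add _ a b
      map_smul' := by
        intro r x
        rw [smulK, RingHom.id_apply, smulk, Bialgebra.counit_mul, mul_comm] }
  have hεsurj : Function.Surjective εK' := by
    intro t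
    exact ⟨algebraMap k K t, by simp [εK', Bialgebra.counit_algebraMap]⟩
  obtain ⟨ξ', hξ'⟩ := Module.projective_lifting_property εK' εJ' hεsurj
  let ξ : J →ₗ[k] K :=
    { toFun := fun a => ξ' a
      map_add' := fun a b => map_add ξ' a b
      map_smul' := by
        intro t a
        rw [RingHom.id_apply]
        have h1 : t • a = (MulOpposite.op (algebraMap k K t)) • a := by
          rw [smulJ, MulOpposite.unop_op, AlgHom.commutes, Algebra.smul_def,
            ← Algebra.commutes]
        rw [h1, map_smul, smulK, MulOpposite.unop_op, Algebra.smul_def,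
          ← Algebra.commutes] }
  have hξ1 : ∀ (a : J) (c : K), ξ (a * ι c) = ξ a * c := by
    intro a c
    have h := ξ'.map_smul (MulOpposite.op c) a
    rw [smulJ, MulOpposite.unop_op, smulK, MulOpposite.unop_op] at h
    exact h
  have hξ2 : ∀ a : J, Coalgebra.counit (R := k) (ξ a) = Coalgebra.counit (R := k) a :=
    fun a => LinearMap.congr_fun hξ' a
  -- ### The section `s`
  set G : N ⊗[k] J →ₗ[k] M := auxSec k J K actM actN s₀ ξ with hG
  set s : N →ₗ[k] M := G ∘ₗ ρN with hs
  have hppt : ∀ (m : M) (c : K), p (actM m c) = actN (p m) c := by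
    intro m c
    have h := LinearMap.congr_fun hpK (m ⊗ₜ[k] c)
    simpa using h
  have hs₀ppt : ∀ x : N, p (s₀ x) = x := fun x => LinearMap.congr_fun hs₀p x
  refine ⟨s, ?_, ?_, ?_⟩
  -- ### (1) `p ∘ s = id`
  · apply LinearMap.ext
    intro n
    obtain ⟨Sn, hSn⟩ := TensorProduct.exists_finset (ρN n)
    rw [LinearMap.comp_apply, LinearMap.id_apply]
    have hsn : s n = ∑ q ∈ Sn, G (q.1 ⊗ₜ[k] q.2) := by
      rw [hs, LinearMap.comp_apply, hSn, map_sum]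
    rw [hsn, map_sum]
    have term : ∀ q ∈ Sn, p (G (q.1 ⊗ₜ[k] q.2))
        = Coalgebra.counit (R := k) (A := J) q.2 • q.1 := by
      intro q _
      rw [hG, auxSec_tmul k J K actM actN s₀ ξ q.1 q.2 rfl
        (Coalgebra.Repr.arbitrary k (ξ q.2)), map_sum]
      set rc := Coalgebra.Repr.arbitrary k (ξ q.2)
      have e : ∀ t ∈ rc.index,
          p (actM (s₀ (actN q.1 (HopfAlgebra.antipode (R := k) (rc.left t)))) (rc.right t))
          = actN q.1 (HopfAlgebra.antipode (R := k) (rc.left t) * rc.right t) := by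
        intro t _
        rw [hppt, hs₀ppt, hactNmul]
      rw [Finset.sum_congr rfl e, ← map_sum]
      rw [HopfAlgebra.sum_antipode_mul_eq_algebraMap_counit rc, hξ2, Algebra.algebraMap_eq_smul_one,
        map_smul, hactN1]
    rw [Finset.sum_congr rfl term]
    have h := hcounitN n
    rw [hSn, map_sum, map_sum] at h
    simpa [TensorProduct.rid_tmul] using h
  -- ### (2) `K`-linearity
  · apply TensorProduct.ext'
    intro n e
    simp only [LinearMap.comp_apply, TensorProduct.lift.tmul, LinearMap.rTensor_tmul]
    obtain ⟨Sn, hSn⟩ := TensorProduct.exists_finset (ρN n)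
    set rca : (q : N × J) → Coalgebra.Repr k (ξ q.2) (K × K) :=
      fun q => Coalgebra.Repr.arbitrary k (ξ q.2) with hrca
    set re : Coalgebra.Repr k e (K × K) := Coalgebra.Repr.arbitrary k e with hre
    set ree : (v : re.ι) → Coalgebra.Repr k (re.right v) (K × K) :=
      fun v => Coalgebra.Repr.arbitrary k (re.right v) with hree
    -- the right-hand side
    have hsn : s n = ∑ q ∈ Sn, ∑ t ∈ (rca q).index,
        actM (s₀ (actN q.1 (HopfAlgebra.antipode (R := k) ((rca q).left t))))
          ((rca q).right t) := by
      rw [hs, LinearMap.comp_apply, hSn, map_sum]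
      exact Finset.sum_congr rfl fun q _ => by
        rw [hG, auxSec_tmul k J K actM actN s₀ ξ q.1 q.2 rfl (rca q)]
    have hRHS : actM (s n) e = ∑ q ∈ Sn, ∑ t ∈ (rca q).index,
        actM (s₀ (actN q.1 (HopfAlgebra.antipode (R := k) ((rca q).left t))))
          ((rca q).right t * e) := by
      rw [hsn, map_sum, LinearMap.sum_apply]
      refine Finset.sum_congr rfl fun q _ => ?_
      rw [map_sum, LinearMap.sum_apply]
      exact Finset.sum_congr rfl fun t _ => hactMmul _ _ _
    -- the left-hand side
    have hρ : ρN (actN n e) = ∑ q ∈ Sn, ∑ v ∈ re.index,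
        actN q.1 (re.left v) ⊗ₜ[k] (q.2 * ι (re.right v)) := by
      rw [act_coact k J K ι actN ρN hcompatN n re]
      have e1 : ∀ v ∈ re.index,
          (TensorProduct.map (actN.flip (re.left v))
            (LinearMap.mulRight k (ι (re.right v)))) (ρN n)
          = ∑ q ∈ Sn, actN q.1 (re.left v) ⊗ₜ[k] (q.2 * ι (re.right v)) := by
        intro v _
        rw [hSn, map_sum]
        exact Finset.sum_congr rfl fun q _ => by
          rw [TensorProduct.map_tmul, LinearMap.flip_apply, LinearMap.mulRight_apply]
      rw [Finset.sum_congr rfl e1, Finset.sum_comm]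
    -- main computation
    have key : s (actN n e) = ∑ q ∈ Sn, ∑ t ∈ (rca q).index,
        actM (s₀ (actN q.1 (HopfAlgebra.antipode (R := k) ((rca q).left t))))
          ((rca q).right t * e) := by
      rw [hs, LinearMap.comp_apply, hρ, map_sum]
      refine Finset.sum_congr rfl fun q _ => ?_
      rw [map_sum]
      have expand : ∀ v ∈ re.index,
          G (actN q.1 (re.left v) ⊗ₜ[k] (q.2 * ι (re.right v)))
          = ∑ t ∈ (rca q).index, ∑ u ∈ (ree v).index,
              actM (s₀ (actN q.1
                ((re.left v * HopfAlgebra.antipode (R := k) ((ree v).left u)) *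
                  HopfAlgebra.antipode (R := k) ((rca q).left t))))
                ((rca q).right t * (ree v).right u) := by
        intro v _
        rw [hG, auxSec_tmul k J K actM actN s₀ ξ _ _ (hξ1 q.2 (re.right v))
          (MaschkeSplittingAux.ReprMul (rca q) (ree v))]
        show (∑ w ∈ (rca q).index ×ˢ (ree v).index,
            actM (s₀ (actN (actN q.1 (re.left v))
              (HopfAlgebra.antipode (R := k) ((rca q).left w.1 * (ree v).left w.2))))
              ((rca q).right w.1 * (ree v).right w.2)) = _
        rw [Finset.sum_product]
        refine Finset.sum_congr rfl fun t _ => Finset.sum_congr rfl fun u _ => ?_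
        rw [MaschkeSplittingAux.antipode_mul_antidistrib, hactNmul, ← mul_assoc]
      rw [Finset.sum_congr rfl expand, Finset.sum_comm]
      refine Finset.sum_congr rfl fun t _ => ?_
      set χ : K →ₗ[k] K →ₗ[k] M :=
        ((actM ∘ₗ s₀ ∘ₗ (actN q.1) ∘ₗ
            LinearMap.mulRight k (HopfAlgebra.antipode (R := k) ((rca q).left t))).compl₂
          (LinearMap.mulLeft k ((rca q).right t))) with hχ
      set B : K ⊗[k] K →ₗ[k] M := TensorProduct.lift χ with hB
      have B_tmul : ∀ x y : K, B (x ⊗ₜ[k] y)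
          = actM (s₀ (actN q.1 (x * HopfAlgebra.antipode (R := k) ((rca q).left t))))
              ((rca q).right t * y) := by
        intro x y
        simp [hB, hχ]
      have h := congrArg B (MaschkeSplittingAux.sum_mul_antipode_tmul re ree)
      simp only [map_sum, B_tmul] at h
      rw [h, one_mul]
    rw [key, hRHS]
  -- ### (3) `J`-colinearity
  · apply LinearMap.ext
    intro n
    simp only [LinearMap.comp_apply]
    obtain ⟨Sn, hSn⟩ := TensorProduct.exists_finset (ρN n)
    have hSm' : ∀ q : N × J, ∃ T : Finset (N × J), ρN q.1 = ∑ q' ∈ T, q'.1 ⊗ₜ[k] q'.2 :=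
      fun q => TensorProduct.exists_finset (ρN q.1)
    choose Sm hSm using hSm'
    set rca : (q : N × J) → Coalgebra.Repr k (ξ q.2) (K × K) :=
      fun q => Coalgebra.Repr.arbitrary k (ξ q.2) with hrca
    set r2 : (q : N × J) → (t : (rca q).ι) → Coalgebra.Repr k ((rca q).left t) (K × K) :=
      fun q t => Coalgebra.Repr.arbitrary k ((rca q).left t) with hr2
    set rcr : (q : N × J) → (t : (rca q).ι) → Coalgebra.Repr k ((rca q).right t) (K × K) :=
      fun q t => Coalgebra.Repr.arbitrary k ((rca q).right t) with hrcr
    -- the element W = Σ n⁰ ⊗ Δ(n¹)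
    have hW : ∑ q ∈ Sn, ∑ q' ∈ Sm q, q'.1 ⊗ₜ[k] (q'.2 ⊗ₜ[k] q.2)
        = (Coalgebra.comul (R := k) (A := J)).lTensor N (ρN n) := by
      have h1 : ∀ q ∈ Sn, ∑ q' ∈ Sm q, q'.1 ⊗ₜ[k] (q'.2 ⊗ₜ[k] q.2)
          = (TensorProduct.assoc k N J J) ((ρN q.1) ⊗ₜ[k] q.2) := by
        intro q _
        rw [hSm q, TensorProduct.sum_tmul, map_sum]
        exact Finset.sum_congr rfl fun q' _ => (TensorProduct.assoc_tmul _ _ _).symm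
      rw [Finset.sum_congr rfl h1, ← map_sum]
      have h2 : ∑ q ∈ Sn, (ρN q.1) ⊗ₜ[k] q.2 = (ρN.rTensor J) (ρN n) := by
        rw [hSn, map_sum]
        exact Finset.sum_congr rfl fun q _ => by rw [LinearMap.rTensor_tmul]
      rw [h2]
      have h3 := LinearMap.congr_fun hcoassocN n
      simpa using h3
    have hWτ : (LinearMap.lTensor N (TensorProduct.comm k J J).toLinearMap)
        ((Coalgebra.comul (R := k) (A := J)).lTensor N (ρN n))
        = (Coalgebra.comul (R := k) (A := J)).lTensor N (ρN n) := by
      rw [hSn, map_sum, map_sum]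
      refine Finset.sum_congr rfl fun q _ => ?_
      rw [LinearMap.lTensor_tmul, LinearMap.lTensor_tmul]
      simp only [LinearEquiv.coe_coe]
      rw [hcocommJ]
    set Ω : N ⊗[k] (J ⊗[k] J) →ₗ[k] M ⊗[k] J :=
      G.rTensor J ∘ₗ (TensorProduct.assoc k N J J).symm.toLinearMap with hΩ
    have Ω_tmul : ∀ (a : N) (b c : J), Ω (a ⊗ₜ[k] (b ⊗ₜ[k] c)) = G (a ⊗ₜ[k] b) ⊗ₜ[k] c := by
      intro a b c; simp [hΩ]
    -- the right-hand side equals `Ω W`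
    have hRHS : s.rTensor J (ρN n)
        = Ω ((Coalgebra.comul (R := k) (A := J)).lTensor N (ρN n)) := by
      rw [← hW, map_sum, hSn, map_sum]
      refine Finset.sum_congr rfl fun q _ => ?_
      rw [LinearMap.rTensor_tmul, map_sum]
      have : s q.1 = ∑ q' ∈ Sm q, G (q'.1 ⊗ₜ[k] q'.2) := by
        rw [hs, LinearMap.comp_apply, hSm q, map_sum]
      rw [this, TensorProduct.sum_tmul]
      exact Finset.sum_congr rfl fun q' _ => (Ω_tmul _ _ _).symm
    rw [hRHS]
    -- the left-hand side
    have hsn : s n = ∑ q ∈ Sn, ∑ t ∈ (rca q).index,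
        actM (s₀ (actN q.1 (HopfAlgebra.antipode (R := k) ((rca q).left t))))
          ((rca q).right t) := by
      rw [hs, LinearMap.comp_apply, hSn, map_sum]
      exact Finset.sum_congr rfl fun q _ => by
        rw [hG, auxSec_tmul k J K actM actN s₀ ξ q.1 q.2 rfl (rca q)]
    have hLHS : ρM (s n) = ∑ q ∈ Sn, ∑ t ∈ (rca q).index, ∑ w ∈ (rcr q t).index,
        ∑ v ∈ (r2 q t).index, ∑ q' ∈ Sm q,
        actM (s₀ (actN q'.1 (HopfAlgebra.antipode (R := k) ((r2 q t).left v))))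
            ((rcr q t).left w)
          ⊗ₜ[k] (q'.2 *
            ι (HopfAlgebra.antipode (R := k) ((r2 q t).right v) * (rcr q t).right w)) := by
      rw [hsn, map_sum]
      refine Finset.sum_congr rfl fun q _ => ?_
      rw [map_sum]
      refine Finset.sum_congr rfl fun t _ => ?_
      rw [act_coact k J K ι actM ρM hcompatM _ (rcr q t)]
      refine Finset.sum_congr rfl fun w _ => ?_
      have hX : ρM (s₀ (actN q.1 (HopfAlgebra.antipode (R := k) ((rca q).left t))))
          = (LinearMap.rTensor J s₀)
              (ρN (actN q.1 (HopfAlgebra.antipode (R := k) ((rca q).left t)))) :=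
        LinearMap.congr_fun hs₀J _
      rw [hX, act_coact k J K ι actN ρN hcompatN q.1
        (MaschkeSplittingAux.ReprAntipode hcocommK (r2 q t))]
      rw [map_sum, map_sum]
      refine Finset.sum_congr rfl fun v _ => ?_
      rw [hSm q, map_sum, map_sum, map_sum]
      refine Finset.sum_congr rfl fun q' _ => ?_
      show (TensorProduct.map (actM.flip ((rcr q t).left w))
          (LinearMap.mulRight k (ι ((rcr q t).right w))))
          ((LinearMap.rTensor J s₀)
            ((TensorProduct.map (actN.flip (HopfAlgebra.antipode (R := k) ((r2 q t).left v)))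
              (LinearMap.mulRight k (ι (HopfAlgebra.antipode (R := k) ((r2 q t).right v)))))
              (q'.1 ⊗ₜ[k] q'.2))) = _
      rw [TensorProduct.map_tmul, LinearMap.rTensor_tmul, TensorProduct.map_tmul]
      simp only [LinearMap.flip_apply, LinearMap.mulRight_apply]
      rw [mul_assoc, ← map_mul]
    -- reorder the sums
    have hLHS2 : ρM (s n) = ∑ q ∈ Sn, ∑ q' ∈ Sm q, ∑ t ∈ (rca q).index,
        ∑ v ∈ (r2 q t).index, ∑ w ∈ (rcr q t).index,
        actM (s₀ (actN q'.1 (HopfAlgebra.antipode (R := k) ((r2 q t).left v))))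
            ((rcr q t).left w)
          ⊗ₜ[k] (q'.2 *
            ι (HopfAlgebra.antipode (R := k) ((r2 q t).right v) * (rcr q t).right w)) := by
      rw [hLHS]
      refine Finset.sum_congr rfl fun q _ => ?_
      calc ∑ t ∈ (rca q).index, ∑ w ∈ (rcr q t).index, ∑ v ∈ (r2 q t).index, ∑ q' ∈ Sm q, actM (s₀ (actN q'.1 (HopfAlgebra.antipode (R := k) ((r2 q t).left v))))
              ((rcr q t).left w)
            ⊗ₜ[k] (q'.2 * ι (HopfAlgebra.antipode (R := k) ((r2 q t).right v) *
              (rcr q t).right w))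
          = ∑ t ∈ (rca q).index, ∑ w ∈ (rcr q t).index, ∑ q' ∈ Sm q, ∑ v ∈ (r2 q t).index, actM (s₀ (actN q'.1 (HopfAlgebra.antipode (R := k) ((r2 q t).left v))))
              ((rcr q t).left w)
            ⊗ₜ[k] (q'.2 * ι (HopfAlgebra.antipode (R := k) ((r2 q t).right v) *
              (rcr q t).right w)) :=
            Finset.sum_congr rfl fun t _ => Finset.sum_congr rfl fun w _ => Finset.sum_comm
        _ = ∑ t ∈ (rca q).index, ∑ q' ∈ Sm q, ∑ w ∈ (rcr q t).index, ∑ v ∈ (r2 q t).index, actM (s₀ (actN q'.1 (HopfAlgebra.antipode (R := k) ((r2 q t).left v))))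
              ((rcr q t).left w)
            ⊗ₜ[k] (q'.2 * ι (HopfAlgebra.antipode (R := k) ((r2 q t).right v) *
              (rcr q t).right w)) :=
            Finset.sum_congr rfl fun t _ => Finset.sum_comm
        _ = ∑ q' ∈ Sm q, ∑ t ∈ (rca q).index, ∑ w ∈ (rcr q t).index, ∑ v ∈ (r2 q t).index, actM (s₀ (actN q'.1 (HopfAlgebra.antipode (R := k) ((r2 q t).left v))))
              ((rcr q t).left w)
            ⊗ₜ[k] (q'.2 * ι (HopfAlgebra.antipode (R := k) ((r2 q t).right v) *
              (rcr q t).right w)) := Finset.sum_comm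
        _ = ∑ q' ∈ Sm q, ∑ t ∈ (rca q).index, ∑ v ∈ (r2 q t).index, ∑ w ∈ (rcr q t).index, actM (s₀ (actN q'.1 (HopfAlgebra.antipode (R := k) ((r2 q t).left v))))
              ((rcr q t).left w)
            ⊗ₜ[k] (q'.2 * ι (HopfAlgebra.antipode (R := k) ((r2 q t).right v) *
              (rcr q t).right w)) :=
            Finset.sum_congr rfl fun q' _ => Finset.sum_congr rfl fun t _ => Finset.sum_comm
    rw [hLHS2]
    -- per (q, q'): contract with `sum_dagger`
    have contract : ∀ q ∈ Sn, ∀ q' ∈ Sm q,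
        ∑ t ∈ (rca q).index, ∑ v ∈ (r2 q t).index, ∑ w ∈ (rcr q t).index,
          actM (s₀ (actN q'.1 (HopfAlgebra.antipode (R := k) ((r2 q t).left v))))
              ((rcr q t).left w)
            ⊗ₜ[k] (q'.2 *
              ι (HopfAlgebra.antipode (R := k) ((r2 q t).right v) * (rcr q t).right w))
        = Ω (q'.1 ⊗ₜ[k] (q.2 ⊗ₜ[k] q'.2)) := by
      intro q _ q' _
      set Ψ : K ⊗[k] (K ⊗[k] K) →ₗ[k] M ⊗[k] J :=
        TensorProduct.map
          (TensorProduct.lift (actM ∘ₗ s₀ ∘ₗ (actN q'.1)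
            ∘ₗ (HopfAlgebra.antipode (R := k) (A := K))))
          (LinearMap.mulLeft k q'.2 ∘ₗ ι.toLinearMap)
        ∘ₗ (TensorProduct.assoc k K K K).symm.toLinearMap with hΨ
      have Ψ_tmul : ∀ x y z : K, Ψ (x ⊗ₜ[k] (y ⊗ₜ[k] z))
          = actM (s₀ (actN q'.1 (HopfAlgebra.antipode (R := k) x))) y
              ⊗ₜ[k] (q'.2 * ι z) := by
        intro x y z; simp [hΨ]
      have hd := congrArg Ψ
        (MaschkeSplittingAux.sum_dagger hcocommK (rca q) (r2 q) (rcr q))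
      simp only [map_sum, Ψ_tmul] at hd
      rw [hd]
      have : ∀ t ∈ (rca q).index,
          actM (s₀ (actN q'.1 (HopfAlgebra.antipode (R := k) ((rca q).left t))))
              ((rca q).right t) ⊗ₜ[k] (q'.2 * ι (1 : K))
          = actM (s₀ (actN q'.1 (HopfAlgebra.antipode (R := k) ((rca q).left t))))
              ((rca q).right t) ⊗ₜ[k] q'.2 := by
        intro t _
        rw [map_one, mul_one]
      rw [Finset.sum_congr rfl this, ← TensorProduct.sum_tmul,
        ← auxSec_tmul k J K actM actN s₀ ξ q'.1 q.2 rfl (rca q), ← hG, Ω_tmul]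
    rw [Finset.sum_congr rfl (fun q hq => Finset.sum_congr rfl (contract q hq))]
    -- finally, use cocommutativity of `J` to identify the two sides
    have swap : ∑ q ∈ Sn, ∑ q' ∈ Sm q, q'.1 ⊗ₜ[k] (q.2 ⊗ₜ[k] q'.2)
        = (Coalgebra.comul (R := k) (A := J)).lTensor N (ρN n) := by
      rw [← hWτ, ← hW, map_sum]
      refine Finset.sum_congr rfl fun q _ => ?_
      rw [map_sum]
      refine Finset.sum_congr rfl fun q' _ => ?_
      rw [LinearMap.lTensor_tmul]
      simp only [LinearEquiv.coe_coe, TensorProduct.comm_tmul]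
    have final : ∑ q ∈ Sn, ∑ q' ∈ Sm q, Ω (q'.1 ⊗ₜ[k] (q.2 ⊗ₜ[k] q'.2))
        = Ω ((Coalgebra.comul (R := k) (A := J)).lTensor N (ρN n)) := by
      rw [← swap, map_sum Ω]
      exact Finset.sum_congr rfl fun q _ => (map_sum Ω _ _).symm
    exact final

end
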